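/- Let a > 0, τ ≠ 0, b ∈ ℝ, C ∈ ℝ. Then the function X(t) = C · Σ_{n=0}^∞ (1/n!) (b/(aτ))^n exp(-a(t - nτ)²/2) satisfies the delay differential equation X'(t) + a·t·X(t) = b·X(t - τ) for all t ∈ ℝ. -/

import Mathlib

open Real

theorem stmt_0 (a b τ C : ℝ) (ha : 0 < a) (hτ : τ ≠ 0) (X : ℝ → ℝ)
    (hX : ∀ t : ℝ, X t =
      C * ∑' n : ℕ, (1 / (n.factorial : ℝ)) * (b / (a * τ)) ^ n *
        Real.exp (-a * (t - n * τ) ^ 2 / 2)) :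
    ∀ t : ℝ, deriv X t + a * t * X t = b * X (t - τ) := by
  intro t
  set f : ℕ → ℝ → ℝ := fun n t =>
    (1 / (n.factorial : ℝ)) * (b / (a * τ)) ^ n * Real.exp (-a * (t - n * τ) ^ 2 / 2) with hf
  set f' : ℕ → ℝ → ℝ := fun n t => (-(a * (t - n * τ))) * f n t with hf'
  set r : ℝ := |b / (a * τ)| with hr
  have haτ : a * τ ≠ 0 := mul_ne_zero (ne_of_gt ha) hτ
  have hsa : (0:ℝ) < Real.sqrt a := Real.sqrt_pos.mpr ha
  -- derivative of each term
  have hderiv : ∀ n (y : ℝ), HasDerivAt (f n) (f' n y) y := by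
    intro n y
    have h1 : HasDerivAt (fun t : ℝ => t - n * τ) 1 y := (hasDerivAt_id y).sub_const _
    have h2 : HasDerivAt (fun t : ℝ => (t - n * τ) ^ 2) (2 * (y - n * τ) ^ 1 * 1) y :=
      h1.pow 2
    have h3 : HasDerivAt (fun t : ℝ => -a * (t - n * τ) ^ 2 / 2)
        (-a * (2 * (y - n * τ) ^ 1 * 1) / 2) y := (h2.const_mul (-a)).div_const 2
    have h4 := (h3.exp).const_mul ((1 / (n.factorial : ℝ)) * (b / (a * τ)) ^ n)
    refine h4.congr_deriv ?_
    simp [hf', hf]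
    ring
  -- bound on derivatives
  have key : ∀ (x : ℝ), a * |x| * Real.exp (-a * x ^ 2 / 2) ≤ Real.sqrt a := by
    intro x
    have hax : Real.sqrt a * |x| ≤ Real.exp (a * x ^ 2 / 2) := by
      have h1 : Real.sqrt a * |x| ≤ 1 + (Real.sqrt a * |x|) ^ 2 / 2 := by
        nlinarith [sq_nonneg (Real.sqrt a * |x| - 1)]
      have h2 : (1 : ℝ) + (Real.sqrt a * |x|) ^ 2 / 2 ≤ Real.exp ((Real.sqrt a * |x|) ^ 2 / 2) :=
        by linarith [Real.add_one_le_exp ((Real.sqrt a * |x|) ^ 2 / 2)]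
      have h3 : (Real.sqrt a * |x|) ^ 2 = a * x ^ 2 := by
        rw [mul_pow, Real.sq_sqrt (le_of_lt ha), sq_abs]
      rw [h3] at h2; linarith
    have := mul_le_mul_of_nonneg_right hax (Real.exp_nonneg (-a * x ^ 2 / 2))
    rw [← Real.exp_add] at this
    have he : a * x ^ 2 / 2 + -a * x ^ 2 / 2 = 0 := by ring
    rw [he, Real.exp_zero] at this
    have haa : a = Real.sqrt a * Real.sqrt a := (Real.mul_self_sqrt (le_of_lt ha)).symm
    set E := Real.exp (-a * x ^ 2 / 2) with hE
    nlinarith [mul_le_mul_of_nonneg_left this hsa.le, abs_nonneg x,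
      Real.exp_nonneg (-a * x ^ 2 / 2)]
  have hfle : ∀ n (y : ℝ), |f n y| ≤ r ^ n / (n.factorial : ℝ) := by
    intro n y
    have h1 : Real.exp (-a * (y - n * τ) ^ 2 / 2) ≤ 1 := by
      apply Real.exp_le_one_iff.mpr
      have : (0:ℝ) ≤ (y - n * τ) ^ 2 := sq_nonneg _
      nlinarith
    have h2 : (0:ℝ) < (n.factorial : ℝ) := by positivity
    rw [hf]
    rw [abs_mul, abs_mul, abs_pow,
      abs_of_pos (show (0:ℝ) < 1 / (n.factorial:ℝ) by positivity),
      abs_of_nonneg (Real.exp_nonneg _)]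
    calc 1 / (n.factorial:ℝ) * |b / (a*τ)| ^ n * Real.exp (-a * (y - n*τ)^2/2)
        ≤ 1 / (n.factorial:ℝ) * |b / (a*τ)| ^ n * 1 := by
          apply mul_le_mul_of_nonneg_left h1; positivity
      _ = r ^ n / (n.factorial:ℝ) := by rw [hr]; ring
  have hf'le : ∀ n (y : ℝ), ‖f' n y‖ ≤ Real.sqrt a * (r ^ n / (n.factorial : ℝ)) := by
    intro n y
    have h2 : (0:ℝ) < (n.factorial : ℝ) := by positivity
    have expand : ‖f' n y‖ = a * |y - n * τ| * Real.exp (-a * (y - n*τ)^2/2) *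
        (|b / (a*τ)| ^ n / (n.factorial:ℝ)) := by
      rw [hf', hf]
      rw [Real.norm_eq_abs, abs_mul, abs_mul, abs_mul, abs_neg, abs_mul, abs_pow,
        abs_of_pos ha, abs_of_nonneg (Real.exp_nonneg _)]
      simp only [abs_div, abs_one]
      rw [abs_of_pos h2]
      ring
    rw [expand]
    have h3 := key (y - n * τ)
    have h4 : (0:ℝ) ≤ |b / (a*τ)| ^ n / (n.factorial:ℝ) := by positivity
    calc a * |y - n * τ| * Real.exp (-a * (y - n*τ)^2/2) * (|b / (a*τ)| ^ n / (n.factorial:ℝ))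
        ≤ Real.sqrt a * (|b / (a*τ)| ^ n / (n.factorial:ℝ)) :=
          mul_le_mul_of_nonneg_right h3 h4
      _ = Real.sqrt a * (r ^ n / (n.factorial:ℝ)) := by rw [hr]
  have hu : Summable (fun n : ℕ => Real.sqrt a * (r ^ n / (n.factorial : ℝ))) :=
    (Real.summable_pow_div_factorial r).mul_left _
  have hu' : Summable (fun n : ℕ => r ^ n / (n.factorial : ℝ)) :=
    Real.summable_pow_div_factorial r
  have hsumf : ∀ y : ℝ, Summable (fun n => f n y) := fun y =>
    Summable.of_abs (hu'.of_nonneg_of_le (fun n => abs_nonneg _) (fun n => hfle n y))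
  have hsumf' : ∀ y : ℝ, Summable (fun n => f' n y) := fun y =>
    Summable.of_norm (hu.of_nonneg_of_le (fun n => norm_nonneg _) (fun n => hf'le n y))
  have hXfun : X = fun y => C * ∑' n, f n y := funext hX
  have hS : HasDerivAt (fun z => ∑' n, f n z) (∑' n, f' n t) t :=
    hasDerivAt_tsum (y₀ := 0) hu hderiv hf'le (hsumf 0) t
  have hX' : HasDerivAt X (C * ∑' n, f' n t) t := by
    rw [hXfun]; exact hS.const_mul C
  have hXt : X t = C * ∑' n, f n t := hX t
  have hXtτ : X (t - τ) = C * ∑' n, f n (t - τ) := hX (t - τ)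
  rw [hX'.deriv, hXt, hXtτ]
  have hcomb : ∀ n : ℕ, f' n t + a * t * f n t = a * τ * n * f n t := by
    intro n; rw [hf']; ring
  have hsum3 : Summable (fun n : ℕ => a * τ * n * f n t) := by
    have : (fun n : ℕ => a * τ * n * f n t) = fun n => f' n t + a * t * f n t :=
      funext fun n => (hcomb n).symm
    rw [this]
    exact (hsumf' t).add (((hsumf t).mul_left (a * t)))
  have hshift : ∀ n : ℕ, a * τ * (n + 1 : ℕ) * f (n + 1) t = b * f n (t - τ) := by
    intro n
    simp only [hf]
    rw [Nat.factorial_succ]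
    push_cast
    rw [show -a * (t - ((n:ℝ) + 1) * τ) ^ 2 / 2 = -a * (t - τ - (n:ℝ) * τ) ^ 2 / 2 by ring]
    set E := Real.exp (-a * (t - τ - (n:ℝ) * τ) ^ 2 / 2) with hE
    have hn : ((n.factorial : ℝ)) ≠ 0 := by positivity
    field_simp
    rw [pow_succ]
    field_simp
  have h1 : a * t * (C * ∑' n, f n t) = C * ∑' n, a * t * f n t := by
    rw [tsum_mul_left]; ring
  rw [h1, ← mul_add, ← Summable.tsum_add (hsumf' t) ((hsumf t).mul_left (a * t)),
    tsum_congr hcomb, Summable.tsum_eq_zero_add hsum3]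
  simp only [Nat.cast_zero, mul_zero, zero_mul, zero_add]
  rw [tsum_congr hshift, tsum_mul_left]
  ring
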